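/- arXiv:1808.05593 — 6 statements merged into one kernel-verified Lean document; each statement's English description precedes it below -/
import Mathlib

section
/- Let μ and ν be Borel probability measures on ℝ. Then ν stochastically dominates μ (i.e., ν((−∞,y)) ≤ μ((−∞,y)) for every y ∈ ℝ) if and only if there exists a coupling π of μ and ν such that π({(a,b) ∈ ℝ × ℝ : a ≤ b}) = 1. -/
open MeasureTheory Set ProbabilityTheory Filter Topology

/-- Quantile function (generalized inverse cdf), set to `0` outside `(0,1)`. -/
noncomputable def sdQuantile (μ : Measure ℝ) (p : ℝ) : ℝ :=
  if 0 < p ∧ p < 1 then sInf {x | p ≤ cdf μ x} else 0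

section Quantile

variable (μ : Measure ℝ) [IsProbabilityMeasure μ] {p : ℝ}

lemma sdQuantile_set_nonempty (hp : 0 < p ∧ p < 1) : {x | p ≤ cdf μ x}.Nonempty := by
  have h := (tendsto_cdf_atTop μ).eventually (eventually_gt_nhds hp.2)
  rcases h.exists with ⟨x, hx⟩
  exact ⟨x, hx.le⟩

lemma sdQuantile_set_bddBelow (hp : 0 < p ∧ p < 1) : BddBelow {x | p ≤ cdf μ x} := by
  have h := (tendsto_cdf_atBot μ).eventually (eventually_lt_nhds hp.1)
  rcases h.exists with ⟨x0, hx0⟩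
  refine ⟨x0, fun x hx => ?_⟩
  by_contra hlt
  push_neg at hlt
  exact absurd (hx.trans (monotone_cdf μ hlt.le)) (not_le.2 hx0)

lemma sdQuantile_mem (hp : 0 < p ∧ p < 1) : p ≤ cdf μ (sdQuantile μ p) := by
  rw [sdQuantile, if_pos hp]
  set l := sInf {x | p ≤ cdf μ x} with hl
  by_contra hcon
  push_neg at hcon
  have hrc : ContinuousWithinAt (cdf μ) (Ici l) l := (cdf μ).right_continuous l
  have hev : ∀ᶠ y in 𝓝[≥] l, cdf μ y < p := hrc.eventually (eventually_lt_nhds hcon)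
  rcases (nhdsGE_basis_of_exists_gt ⟨l + 1, by linarith⟩).eventually_iff.mp hev with ⟨u, hu, hival⟩
  have hle : u ≤ l := by
    refine le_csInf (sdQuantile_set_nonempty μ hp) (fun x hx => ?_)
    by_contra hxu
    push_neg at hxu
    have hlx : l ≤ x := csInf_le (sdQuantile_set_bddBelow μ hp) hx
    exact absurd hx (not_le.2 (hival ⟨hlx, hxu⟩))
  exact absurd hle (not_le.2 hu)

lemma sdQuantile_le_iff (hp : 0 < p ∧ p < 1) {x : ℝ} :
    sdQuantile μ p ≤ x ↔ p ≤ cdf μ x := by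
  constructor
  · intro h
    exact (sdQuantile_mem μ hp).trans (monotone_cdf μ h)
  · intro h
    rw [sdQuantile, if_pos hp]
    exact csInf_le (sdQuantile_set_bddBelow μ hp) h

lemma measurable_sdQuantile : Measurable (sdQuantile μ) := by
  refine measurable_of_Iic (fun x => ?_)
  by_cases hx : (0:ℝ) ≤ x
  · have : sdQuantile μ ⁻¹' Iic x = (Ioo 0 1 ∩ Iic (cdf μ x)) ∪ (Ioo (0:ℝ) 1)ᶜ := by
      ext p
      simp only [mem_preimage, mem_Iic, mem_union, mem_inter_iff, mem_Ioo, mem_compl_iff,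
        not_and, not_lt]
      by_cases hp : 0 < p ∧ p < 1
      · simp only [hp.1, hp.2, and_true, true_and]
        rw [show (sdQuantile μ p ≤ x) ↔ (p ≤ cdf μ x) from sdQuantile_le_iff μ hp]
        constructor
        · intro h; exact Or.inl h
        · rintro (h | h); · exact h
          · first | exact absurd (h hp.1) (not_le.2 hp.2) | exact absurd (h trivial) (not_le.2 hp.2)
      · rw [sdQuantile, if_neg hp]
        simp only [hx, true_iff]
        right
        intro h0
        by_contra h1
        exact hp ⟨h0, lt_of_not_ge h1⟩
    rw [this]
    exact ((measurableSet_Ioo.inter measurableSet_Iic).union measurableSet_Ioo.compl)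
  · have : sdQuantile μ ⁻¹' Iic x = Ioo 0 1 ∩ Iic (cdf μ x) := by
      ext p
      simp only [mem_preimage, mem_Iic, mem_inter_iff, mem_Ioo]
      by_cases hp : 0 < p ∧ p < 1
      · simp only [hp.1, hp.2, true_and]
        exact sdQuantile_le_iff μ hp
      · rw [sdQuantile, if_neg hp]
        constructor
        · intro h; exact absurd h hx
        · rintro ⟨⟨h0, h1⟩, -⟩; exact absurd ⟨h0, h1⟩ hp
    rw [this]
    exact measurableSet_Ioo.inter measurableSet_Iic

/-- The quantile function pushes the uniform measure on `(0,1)` forward to `μ`. -/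
lemma map_sdQuantile :
    (volume.restrict (Ioo (0:ℝ) 1)).map (sdQuantile μ) = μ := by
  have hprob : IsProbabilityMeasure (volume.restrict (Ioo (0:ℝ) 1)) := by
    constructor
    rw [Measure.restrict_apply_univ, Real.volume_Ioo]
    norm_num
  refine Measure.ext_of_Iic _ _ (fun x => ?_)
  rw [Measure.map_apply (measurable_sdQuantile μ) measurableSet_Iic,
    Measure.restrict_apply (measurable_sdQuantile μ measurableSet_Iic)]
  have hsub1 : Ioo 0 (cdf μ x) ⊆ sdQuantile μ ⁻¹' Iic x ∩ Ioo 0 1 := by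
    intro p hp
    have hp1 : p < 1 := lt_of_lt_of_le hp.2 (cdf_le_one μ x)
    have hpm : 0 < p ∧ p < 1 := ⟨hp.1, hp1⟩
    exact ⟨(sdQuantile_le_iff μ hpm).2 hp.2.le, hp.1, hp1⟩
  have hsub2 : sdQuantile μ ⁻¹' Iic x ∩ Ioo 0 1 ⊆ Ioc 0 (cdf μ x) := by
    rintro p ⟨hpx, hp0, hp1⟩
    exact ⟨hp0, (sdQuantile_le_iff μ ⟨hp0, hp1⟩).1 hpx⟩
  have h1 : volume (Ioo 0 (cdf μ x)) = ENNReal.ofReal (cdf μ x) := by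
    rw [Real.volume_Ioo, sub_zero]
  have h2 : volume (Ioc 0 (cdf μ x)) = ENNReal.ofReal (cdf μ x) := by
    rw [Real.volume_Ioc, sub_zero]
  have := le_antisymm ((measure_mono hsub2).trans h2.le) (h1.symm.le.trans (measure_mono hsub1))
  rw [this, ofReal_cdf]

end Quantile

/-- **Coupling and stochastic dominance.** For Borel probability measures `μ` and `ν` on `ℝ`,
`ν` stochastically dominates `μ` (i.e. `ν (Iio y) ≤ μ (Iio y)` for every `y`) if and only if
there is a coupling `π` of `μ` and `ν` (a probability measure on `ℝ × ℝ` with first marginal `μ`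
and second marginal `ν`) concentrated on the set `{(a, b) | a ≤ b}`. -/
theorem stochastic_dominance_iff_coupling
    (μ ν : Measure ℝ) [IsProbabilityMeasure μ] [IsProbabilityMeasure ν] :
    (∀ y : ℝ, ν (Iio y) ≤ μ (Iio y)) ↔
      ∃ π : Measure (ℝ × ℝ), IsProbabilityMeasure π ∧
        π.map Prod.fst = μ ∧ π.map Prod.snd = ν ∧
        π {p : ℝ × ℝ | p.1 ≤ p.2} = 1 := by
  constructor
  · intro h
    -- cdf domination
    have hcdf : ∀ x : ℝ, cdf ν x ≤ cdf μ x := by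
      intro x
      have key : ∀ y, x < y → cdf ν x ≤ cdf μ y := by
        intro y hxy
        rw [cdf_eq_real, cdf_eq_real, measureReal_def, measureReal_def]
        refine ENNReal.toReal_mono (measure_ne_top μ _) ?_
        calc ν (Iic x) ≤ ν (Iio y) := measure_mono (Iic_subset_Iio.2 hxy)
          _ ≤ μ (Iio y) := h y
          _ ≤ μ (Iic y) := measure_mono Iio_subset_Iic_self
      have htend : Tendsto (cdf μ) (𝓝[>] x) (𝓝 (cdf μ x)) :=
        ((cdf μ).right_continuous x).tendsto.mono_left
          (nhdsWithin_mono x Ioi_subset_Ici_self)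
      refine ge_of_tendsto htend ?_
      filter_upwards [self_mem_nhdsWithin] with y hy
      exact key y hy
    -- quantile comparison
    have hQle : ∀ p : ℝ, sdQuantile μ p ≤ sdQuantile ν p := by
      intro p
      by_cases hp : 0 < p ∧ p < 1
      · rw [sdQuantile_le_iff μ hp]
        exact (sdQuantile_mem ν hp).trans (hcdf _)
      · rw [sdQuantile, sdQuantile, if_neg hp, if_neg hp]
    set P : Measure ℝ := volume.restrict (Ioo (0:ℝ) 1) with hP
    have hPprob : IsProbabilityMeasure P := by
      constructor
      rw [hP, Measure.restrict_apply_univ, Real.volume_Ioo]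
      norm_num
    have hf : Measurable (fun p : ℝ => (sdQuantile μ p, sdQuantile ν p)) :=
      (measurable_sdQuantile μ).prodMk (measurable_sdQuantile ν)
    refine ⟨P.map (fun p => (sdQuantile μ p, sdQuantile ν p)),
      Measure.isProbabilityMeasure_map hf.aemeasurable, ?_, ?_, ?_⟩
    · rw [Measure.map_map measurable_fst hf]
      exact map_sdQuantile μ
    · rw [Measure.map_map measurable_snd hf]
      exact map_sdQuantile ν
    · rw [Measure.map_apply hf (measurableSet_le measurable_fst measurable_snd)]
      have : (fun p : ℝ => (sdQuantile μ p, sdQuantile ν p)) ⁻¹'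
          {q : ℝ × ℝ | q.1 ≤ q.2} = univ := by
        ext p
        simp only [mem_preimage, mem_setOf_eq, mem_univ, iff_true]
        exact hQle p
      rw [this]
      exact measure_univ
  · rintro ⟨π, hπ, hfst, hsnd, hone⟩ y
    have hmeas : MeasurableSet {p : ℝ × ℝ | p.1 ≤ p.2} :=
      measurableSet_le measurable_fst measurable_snd
    have hnull : π {p : ℝ × ℝ | p.1 ≤ p.2}ᶜ = 0 := by
      rw [measure_compl hmeas (measure_ne_top π _), hone, measure_univ, tsub_self]
    have hae : ∀ᵐ p ∂π, p.1 ≤ p.2 := by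
      rw [ae_iff]
      convert hnull using 2
      rfl
    rw [← hfst, ← hsnd, Measure.map_apply measurable_fst measurableSet_Iio,
      Measure.map_apply measurable_snd measurableSet_Iio]
    refine measure_mono_ae ?_
    filter_upwards [hae] with p hp hpy
    exact lt_of_le_of_lt hp hpy
end

section
/- Fix n ≥ 2, a baseline hazard α > 0, an infectiousness effect γ ∈ ℝ, coefficients η, ξ : Fin n → ℝ, a bijection v : Fin n → Fin n (v l is the subject infected l-th), and u : Fin n → ℝ with 0 < u l < 1 for all l. For a constant treatment value c ∈ {0,1}, let R_l(c) = (Σ_{a ∈ S_l} exp(η a)) · (α + Σ_{b ∈ I_l} exp(γ·c + ξ b)), W_l(c) = −log(1 − u l)/R_l(c), and T_p(c) = Σ_{l=1}^{p} W_l(c). Then for every p: if γ < 0 then T_p(1) ≥ T_p(0) with strict inequality whenever p ≥ 2; if γ = 0 then T_p(1) = T_p(0); and if γ > 0 then T_p(1) ≤ T_p(0) with strict inequality whenever p ≥ 2. -/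
open Real Finset

/-- **Coupled infection times under cluster randomization (β = 0).**
With subjects relabeled so that `v l` is the subject infected `(l+1)`-th, `I l` the set of
subjects infected before the `(l+1)`-th infection and `S l` its complement, rates
`R c l = (∑ a ∈ S l, exp (η a)) * (α + ∑ b ∈ I l, exp (γ*c + ξ b))` for the constant treatment
vector `c ∈ {0,1}`, quantile-coupled waiting times `W c l = -log (1 - u l) / R c l`, and coupled
infection time of the `p`-th infected subject `T c p = ∑_{l=1}^{p} W c l`: if `γ < 0` then
`T 1 p ≥ T 0 p`, strictly whenever `p ≥ 2`; if `γ = 0` then `T 1 p = T 0 p`; and if `γ > 0` then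
`T 1 p ≤ T 0 p`, strictly whenever `p ≥ 2`. -/
theorem coupled_infection_times_cluster
    (n : ℕ) (hn : 2 ≤ n) (α γ : ℝ) (hα : 0 < α)
    (η ξ : Fin n → ℝ) (v : Equiv.Perm (Fin n))
    (u : Fin n → ℝ) (hu : ∀ l, 0 < u l ∧ u l < 1)
    (I S : Fin n → Finset (Fin n))
    (hI : ∀ l, I l = (Finset.univ.filter (fun k => k < l)).image v)
    (hS : ∀ l, S l = (I l)ᶜ)
    (R : ℝ → Fin n → ℝ)
    (hR : ∀ c l, R c l =
      (∑ a ∈ S l, Real.exp (η a)) * (α + ∑ b ∈ I l, Real.exp (γ * c + ξ b)))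
    (W : ℝ → Fin n → ℝ)
    (hW : ∀ c l, W c l = -Real.log (1 - u l) / R c l)
    (T : ℝ → ℕ → ℝ)
    (hT : ∀ c p, T c p = ∑ l ∈ Finset.univ.filter (fun l : Fin n => (l : ℕ) < p), W c l) :
    ∀ p : ℕ, 1 ≤ p → p ≤ n →
      (γ < 0 → T 0 p ≤ T 1 p ∧ (2 ≤ p → T 0 p < T 1 p)) ∧
      (γ = 0 → T 1 p = T 0 p) ∧
      (0 < γ → T 1 p ≤ T 0 p ∧ (2 ≤ p → T 1 p < T 0 p)) := by

  -- Positivity of the susceptible-side sum: `v l ∈ S l`.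
  have hvl : ∀ l : Fin n, v l ∈ S l := by
    intro l
    rw [hS, Finset.mem_compl, hI]
    simp only [Finset.mem_image, Finset.mem_filter, Finset.mem_univ, true_and]
    rintro ⟨k, hk, hvk⟩
    exact absurd (v.injective hvk ▸ hk) (lt_irrefl l)
  have hApos : ∀ l : Fin n, 0 < ∑ a ∈ S l, Real.exp (η a) := by
    intro l
    exact Finset.sum_pos (fun a _ => Real.exp_pos _) ⟨v l, hvl l⟩
  have hBpos : ∀ (c : ℝ) (l : Fin n),
      0 < α + ∑ b ∈ I l, Real.exp (γ * c + ξ b) := by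
    intro c l
    exact add_pos_of_pos_of_nonneg hα
      (Finset.sum_nonneg fun b _ => (Real.exp_pos _).le)
  have hRpos : ∀ (c : ℝ) (l : Fin n), 0 < R c l := by
    intro c l
    rw [hR]
    exact mul_pos (hApos l) (hBpos c l)
  have hNpos : ∀ l : Fin n, 0 < -Real.log (1 - u l) := by
    intro l
    have h1 := (hu l).1
    have h2 := (hu l).2
    have : Real.log (1 - u l) < 0 := Real.log_neg (by linarith) (by linarith)
    linarith
  have hWpos : ∀ (c : ℝ) (l : Fin n), 0 < W c l := by
    intro c l
    rw [hW]
    exact div_pos (hNpos l) (hRpos c l)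
  -- monotonicity of W in R
  have hWle : ∀ (c c' : ℝ) (l : Fin n), R c l ≤ R c' l → W c' l ≤ W c l := by
    intro c c' l h
    rw [hW, hW, div_le_div_iff₀ (hRpos c' l) (hRpos c l)]
    nlinarith [hNpos l]
  have hWlt : ∀ (c c' : ℝ) (l : Fin n), R c l < R c' l → W c' l < W c l := by
    intro c c' l h
    rw [hW, hW, div_lt_div_iff₀ (hRpos c' l) (hRpos c l)]
    nlinarith [hNpos l]
  -- nonemptiness of I l for l with 1 ≤ l
  have hIne : ∀ l : Fin n, 1 ≤ (l : ℕ) → (I l).Nonempty := by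
    intro l hl
    rw [hI]
    refine ⟨v ⟨0, by omega⟩, Finset.mem_image.2 ⟨⟨0, by omega⟩, ?_, rfl⟩⟩
    simp only [Finset.mem_filter, Finset.mem_univ, true_and]
    exact Fin.mk_lt_of_lt_val (by omega)
  -- R comparisons
  have hRmono : ∀ (c c' : ℝ), γ * c ≤ γ * c' → ∀ l : Fin n, R c l ≤ R c' l := by
    intro c c' hγc l
    rw [hR, hR]
    refine mul_le_mul_of_nonneg_left (add_le_add le_rfl ?_) (hApos l).le
    exact Finset.sum_le_sum fun b _ => Real.exp_le_exp.2 (by linarith)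
  have hRstrict : ∀ (c c' : ℝ), γ * c < γ * c' → ∀ l : Fin n, 1 ≤ (l : ℕ) →
      R c l < R c' l := by
    intro c c' hγc l hl
    rw [hR, hR]
    refine mul_lt_mul_of_pos_left (add_lt_add_of_le_of_lt le_rfl ?_) (hApos l)
    exact Finset.sum_lt_sum_of_nonempty (hIne l hl)
      fun b _ => Real.exp_lt_exp.2 (by linarith)
  intro p hp1 hpn
  have hmem0 : (⟨0, by omega⟩ : Fin n) ∈ Finset.univ.filter (fun l : Fin n => (l : ℕ) < p) := by
    simp only [Finset.mem_filter, Finset.mem_univ, true_and]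
    omega
  have hTle : ∀ (c c' : ℝ), (∀ l : Fin n, W c l ≤ W c' l) → T c p ≤ T c' p := by
    intro c c' h
    rw [hT, hT]
    exact Finset.sum_le_sum fun l _ => h l
  have hTlt : ∀ (c c' : ℝ), 2 ≤ p → (∀ l : Fin n, W c l ≤ W c' l) →
      (∀ l : Fin n, 1 ≤ (l : ℕ) → W c l < W c' l) → T c p < T c' p := by
    intro c c' hp2 hle hlt
    rw [hT, hT]
    refine Finset.sum_lt_sum (fun l _ => hle l) ⟨⟨1, by omega⟩, ?_, hlt ⟨1, by omega⟩ le_rfl⟩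
    simp only [Finset.mem_filter, Finset.mem_univ, true_and]
    omega
  refine ⟨fun hγ => ?_, fun hγ => ?_, fun hγ => ?_⟩
  · -- γ < 0 : R 1 ≤ R 0, so W 0 ≤ W 1
    have hm : ∀ l : Fin n, W 0 l ≤ W 1 l :=
      fun l => hWle 1 0 l (hRmono 1 0 (by nlinarith) l)
    refine ⟨hTle 0 1 hm, fun hp2 => hTlt 0 1 hp2 hm ?_⟩
    intro l hl
    exact hWlt 1 0 l (hRstrict 1 0 (by nlinarith) l hl)
  · -- γ = 0
    have : ∀ l : Fin n, W 1 l = W 0 l := by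
      intro l
      rw [hW, hW, hR, hR]
      simp [hγ]
    rw [hT, hT]
    exact Finset.sum_congr rfl fun l _ => this l
  · -- γ > 0 : R 0 ≤ R 1, so W 1 ≤ W 0
    have hm : ∀ l : Fin n, W 1 l ≤ W 0 l :=
      fun l => hWle 0 1 l (hRmono 0 1 (by nlinarith) l)
    refine ⟨hTle 1 0 hm, fun hp2 => hTlt 1 0 hp2 hm ?_⟩
    intro l hl
    exact hWlt 0 1 l (hRstrict 0 1 (by nlinarith) l hl)
end

section
/- Fix n ≥ 2, a baseline hazard α > 0, an infectiousness effect γ < 0, coefficients η, ξ : Fin n → ℝ, a bijection v : Fin n → Fin n (v l is the subject infected l-th), and u : Fin n → ℝ with 0 < u l < 1 for all l. Let p ≠ q be two positions in {1,…,n}, and let x¹, x⁰ : Fin n → {0,1} be treatment vectors that agree on every subject except that x¹(v p) = 1, x¹(v q) = 0, x⁰(v p) = 0, x⁰(v q) = 1. With T_p(x) = Σ_{l=1}^{p} W_l(x) the coupled infection time of the p-th infected subject: if p < q then T_p(x¹) = T_p(x⁰), and if q < p then T_p(x¹) < T_p(x⁰). -/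
open Real Finset

/-- **Coupled infection times under block randomization (β = 0, γ < 0).**
Subjects are relabeled so that `v l` is the subject infected `(l+1)`-th; `I l` is the set of
subjects infected before the `(l+1)`-th infection and `S l` its complement. For a treatment
vector `x` with values in `{0,1}`, the coupled process has rates
`R x l = (∑ a ∈ S l, exp (η a)) * (α + ∑ b ∈ I l, exp (γ * x b + ξ b))`, waiting times
`W x l = -log (1 - u l) / R x l`, and coupled infection time of the `p`-th infected subject
`T x p = ∑_{l=1}^{p} W x l`. If `x¹` and `x⁰` agree everywhere except that they swap the
treatments of the `p`-th and `q`-th infected subjects (`x¹` treats the `p`-th, `x⁰` the `q`-th),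
then `T x¹ p = T x⁰ p` when `p < q`, and `T x¹ p < T x⁰ p` when `q < p`. -/
theorem coupled_infection_times_block
    (n : ℕ) (hn : 2 ≤ n) (α γ : ℝ) (hα : 0 < α) (hγ : γ < 0)
    (η ξ : Fin n → ℝ) (v : Equiv.Perm (Fin n))
    (u : Fin n → ℝ) (hu : ∀ l, 0 < u l ∧ u l < 1)
    (I S : Fin n → Finset (Fin n))
    (hI : ∀ l, I l = (Finset.univ.filter (fun k => k < l)).image v)
    (hS : ∀ l, S l = (I l)ᶜ)
    (R : (Fin n → ℝ) → Fin n → ℝ)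
    (hR : ∀ x l, R x l =
      (∑ a ∈ S l, Real.exp (η a)) * (α + ∑ b ∈ I l, Real.exp (γ * x b + ξ b)))
    (W : (Fin n → ℝ) → Fin n → ℝ)
    (hW : ∀ x l, W x l = -Real.log (1 - u l) / R x l)
    (T : (Fin n → ℝ) → ℕ → ℝ)
    (hT : ∀ x p, T x p = ∑ l ∈ Finset.univ.filter (fun l : Fin n => (l : ℕ) < p), W x l)
    (p q : ℕ) (hp1 : 1 ≤ p) (hpn : p ≤ n) (hq1 : 1 ≤ q) (hqn : q ≤ n) (hpq : p ≠ q)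
    (x1 x0 : Fin n → ℝ)
    (hx1 : ∀ j, x1 j = 0 ∨ x1 j = 1) (hx0 : ∀ j, x0 j = 0 ∨ x0 j = 1)
    (hx1p : x1 (v ⟨p - 1, by omega⟩) = 1) (hx1q : x1 (v ⟨q - 1, by omega⟩) = 0)
    (hx0p : x0 (v ⟨p - 1, by omega⟩) = 0) (hx0q : x0 (v ⟨q - 1, by omega⟩) = 1)
    (hagree : ∀ j : Fin n,
      j ≠ v ⟨p - 1, by omega⟩ → j ≠ v ⟨q - 1, by omega⟩ → x1 j = x0 j) :
    (p < q → T x1 p = T x0 p) ∧ (q < p → T x1 p < T x0 p) := by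
  -- basic positivity facts
  have hIcard : ∀ l : Fin n, (I l).card < n := by
    intro l
    rw [hI l]
    have h1 : ((Finset.univ.filter (fun k => k < l)).image v).card
        ≤ (Finset.univ.filter (fun k => k < l)).card := Finset.card_image_le
    have hne : (Finset.univ.filter (fun k => k < l)) ≠ Finset.univ := by
      intro h
      have hl : l ∈ Finset.univ.filter (fun k => k < l) := by
        rw [h]; exact Finset.mem_univ l
      simp at hl
    have h2 := Finset.card_lt_card (Finset.ssubset_univ_iff.mpr hne)
    simpa using lt_of_le_of_lt h1 h2
  have hSne : ∀ l : Fin n, (S l).Nonempty := by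
    intro l
    rw [hS, ← Finset.card_pos, Finset.card_compl]
    have := hIcard l
    simp only [Fintype.card_fin]
    omega
  have hA : ∀ l : Fin n, 0 < ∑ a ∈ S l, Real.exp (η a) := fun l =>
    Finset.sum_pos (fun a _ => Real.exp_pos _) (hSne l)
  have hRpos : ∀ x l, 0 < R x l := by
    intro x l
    rw [hR]
    apply mul_pos (hA l)
    have : (0:ℝ) ≤ ∑ b ∈ I l, Real.exp (γ * x b + ξ b) :=
      Finset.sum_nonneg fun b _ => (Real.exp_pos _).le
    linarith
  have hc : ∀ l : Fin n, 0 < -Real.log (1 - u l) := by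
    intro l
    obtain ⟨h1, h2⟩ := hu l
    have h3 : Real.log (1 - u l) < 0 := Real.log_neg (by linarith) (by linarith)
    linarith
  -- the p-th infected subject is never in I l for l < p
  have hnotp : ∀ l : Fin n, (l : ℕ) < p → v ⟨p - 1, by omega⟩ ∉ I l := by
    intro l hl hmem
    rw [hI] at hmem
    obtain ⟨k, hk, hvk⟩ := Finset.mem_image.mp hmem
    have hkeq := v.injective hvk
    subst hkeq
    simp only [Finset.mem_filter, Finset.mem_univ, true_and, Fin.lt_def] at hk
    omega
  constructor
  · -- case p < q : the q-th infected subject is also not in I l for l < p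
    intro hlt
    have hnotq : ∀ l : Fin n, (l : ℕ) < p → v ⟨q - 1, by omega⟩ ∉ I l := by
      intro l hl hmem
      rw [hI] at hmem
      obtain ⟨k, hk, hvk⟩ := Finset.mem_image.mp hmem
      have hkeq := v.injective hvk
      subst hkeq
      simp only [Finset.mem_filter, Finset.mem_univ, true_and, Fin.lt_def] at hk
      omega
    rw [hT, hT]
    apply Finset.sum_congr rfl
    intro l hl
    simp only [Finset.mem_filter, Finset.mem_univ, true_and] at hl
    rw [hW, hW, hR, hR]
    congr 2
    congr 1
    apply Finset.sum_congr rfl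
    intro b hb
    have hbp : b ≠ v ⟨p - 1, by omega⟩ := fun h => hnotp l hl (h ▸ hb)
    have hbq : b ≠ v ⟨q - 1, by omega⟩ := fun h => hnotq l hl (h ▸ hb)
    rw [hagree b hbp hbq]
  · -- case q < p
    intro hlt
    rw [hT, hT]
    have key : ∀ l : Fin n, (l : ℕ) < p →
        ∑ b ∈ I l, Real.exp (γ * x0 b + ξ b) ≤ ∑ b ∈ I l, Real.exp (γ * x1 b + ξ b) := by
      intro l hl
      apply Finset.sum_le_sum
      intro b hb
      have hbp : b ≠ v ⟨p - 1, by omega⟩ := fun h => hnotp l hl (h ▸ hb)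
      by_cases hbq : b = v ⟨q - 1, by omega⟩
      · subst hbq
        rw [hx1q, hx0q]
        apply Real.exp_le_exp.mpr
        nlinarith
      · rw [hagree b hbp hbq]
    have hWle : ∀ l : Fin n, (l : ℕ) < p → W x1 l ≤ W x0 l := by
      intro l hl
      rw [hW, hW]
      have hR01 : R x0 l ≤ R x1 l := by
        rw [hR, hR]
        have := key l hl
        have := hA l
        nlinarith
      exact div_le_div_of_nonneg_left (hc l).le (hRpos x0 l) hR01
    have hqn' : q < n := lt_of_lt_of_le hlt hpn
    have hqmem : (⟨q, hqn'⟩ : Fin n) ∈ Finset.univ.filter (fun l : Fin n => (l : ℕ) < p) := by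
      simp [hlt]
    apply Finset.sum_lt_sum
    · intro l hl
      simp only [Finset.mem_filter, Finset.mem_univ, true_and] at hl
      exact hWle l hl
    · refine ⟨⟨q, hqn'⟩, hqmem, ?_⟩
      set l : Fin n := ⟨q, hqn'⟩ with hldef
      have hl : (l : ℕ) < p := hlt
      have hmemI : v ⟨q - 1, by omega⟩ ∈ I l := by
        rw [hI]
        apply Finset.mem_image_of_mem
        simp only [Finset.mem_filter, Finset.mem_univ, true_and, Fin.lt_def]
        show q - 1 < q
        omega
      have hBlt : ∑ b ∈ I l, Real.exp (γ * x0 b + ξ b)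
          < ∑ b ∈ I l, Real.exp (γ * x1 b + ξ b) := by
        apply Finset.sum_lt_sum
        · intro b hb
          have hbp : b ≠ v ⟨p - 1, by omega⟩ := fun h => hnotp l hl (h ▸ hb)
          by_cases hbq : b = v ⟨q - 1, by omega⟩
          · subst hbq
            rw [hx1q, hx0q]
            apply Real.exp_le_exp.mpr
            nlinarith
          · rw [hagree b hbp hbq]
        · refine ⟨v ⟨q - 1, by omega⟩, hmemI, ?_⟩
          rw [hx1q, hx0q]
          apply Real.exp_lt_exp.mpr
          nlinarith
      have hR01 : R x0 l < R x1 l := by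
        rw [hR, hR]
        have := hA l
        nlinarith
      rw [hW, hW]
      exact div_lt_div_of_pos_left (hc l) (hRpos x0 l) hR01
end

section
/- Fix n ≥ 1, a baseline hazard α > 0, an infectiousness effect γ ∈ ℝ, coefficients η, ξ : Fin n → ℝ, a bijection v : Fin n → Fin n (v l is the subject infected l-th), and u : Fin n → ℝ with 0 < u l < 1 for all l. Let p be a position in {1,…,n}, and let x¹, x⁰ : Fin n → {0,1} be treatment vectors that agree on every subject except possibly on v p. Then the coupled infection times of the p-th infected subject are equal: T_p(x¹) = T_p(x⁰). -/
open Real Finset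

/-- **Coupled infection times under Bernoulli randomization (β = 0).**
Subjects are relabeled so that `v l` is the subject infected `(l+1)`-th; `I l` is the set of
subjects infected before the `(l+1)`-th infection and `S l` its complement. For a treatment
vector `x` with values in `{0,1}`, the coupled process has rates
`R x l = (∑ a ∈ S l, exp (η a)) * (α + ∑ b ∈ I l, exp (γ * x b + ξ b))`, waiting times
`W x l = -log (1 - u l) / R x l`, and coupled infection time of the `p`-th infected subject
`T x p = ∑_{l=1}^{p} W x l`. If `x¹` and `x⁰` agree on every subject except possibly on the
subject infected `p`-th, then `T x¹ p = T x⁰ p`: a subject's own treatment does not enter any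
rate before that subject is infected. -/
theorem coupled_infection_times_bernoulli
    (n : ℕ) (hn : 1 ≤ n) (α γ : ℝ) (hα : 0 < α)
    (η ξ : Fin n → ℝ) (v : Equiv.Perm (Fin n))
    (u : Fin n → ℝ) (hu : ∀ l, 0 < u l ∧ u l < 1)
    (I S : Fin n → Finset (Fin n))
    (hI : ∀ l, I l = (Finset.univ.filter (fun k => k < l)).image v)
    (hS : ∀ l, S l = (I l)ᶜ)
    (R : (Fin n → ℝ) → Fin n → ℝ)
    (hR : ∀ x l, R x l =
      (∑ a ∈ S l, Real.exp (η a)) * (α + ∑ b ∈ I l, Real.exp (γ * x b + ξ b)))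
    (W : (Fin n → ℝ) → Fin n → ℝ)
    (hW : ∀ x l, W x l = -Real.log (1 - u l) / R x l)
    (T : (Fin n → ℝ) → ℕ → ℝ)
    (hT : ∀ x p, T x p = ∑ l ∈ Finset.univ.filter (fun l : Fin n => (l : ℕ) < p), W x l)
    (p : ℕ) (hp1 : 1 ≤ p) (hpn : p ≤ n)
    (x1 x0 : Fin n → ℝ)
    (hx1 : ∀ j, x1 j = 0 ∨ x1 j = 1) (hx0 : ∀ j, x0 j = 0 ∨ x0 j = 1)
    (hagree : ∀ j : Fin n, j ≠ v ⟨p - 1, by omega⟩ → x1 j = x0 j) :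
    T x1 p = T x0 p := by
  rw [hT, hT]
  refine Finset.sum_congr rfl fun l hl => ?_
  simp only [Finset.mem_filter, Finset.mem_univ, true_and] at hl
  rw [hW, hW, hR, hR]
  have hsum : ∑ b ∈ I l, Real.exp (γ * x1 b + ξ b)
      = ∑ b ∈ I l, Real.exp (γ * x0 b + ξ b) := by
    refine Finset.sum_congr rfl fun b hb => ?_
    rw [hI] at hb
    obtain ⟨k, hk, rfl⟩ := Finset.mem_image.mp hb
    simp only [Finset.mem_filter, Finset.mem_univ, true_and] at hk
    have hne : v k ≠ v ⟨p - 1, by omega⟩ := by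
      intro h
      have := v.injective h
      have : (k : ℕ) = p - 1 := congrArg Fin.val this
      have hkl : (k : ℕ) < (l : ℕ) := hk
      omega
    rw [hagree _ hne]
  rw [hsum]
end

section
/- Let k ∈ ℕ and let r, s : Fin k → ℝ satisfy 0 < s l ≤ r l for all l. Let μ_r be the product over l of the exponential distributions with rates r l on the space of functions Fin k → ℝ, and similarly μ_s. Then for every t ∈ ℝ, μ_s({f : Σ_l f l < t}) ≤ μ_r({f : Σ_l f l < t}); that is, the sum of independent exponentials with the smaller rates stochastically dominates the sum with the larger rates. -/
open MeasureTheory ProbabilityTheory Real Set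

lemma expMeasure_def' (r : ℝ) : expMeasure r = volume.withDensity (exponentialPDF r) := rfl

lemma expMeasure_Iic' {r : ℝ} (hr : 0 < r) (x : ℝ) :
    expMeasure r (Iic x) = ENNReal.ofReal (if 0 ≤ x then 1 - exp (-(r * x)) else 0) := by
  rw [expMeasure_def', withDensity_apply _ measurableSet_Iic,
    lintegral_exponentialPDF_eq_antiDeriv hr]

lemma expMeasure_neg_null' {r : ℝ} : expMeasure r (Iio 0) = 0 := by
  rw [expMeasure_def', withDensity_apply _ measurableSet_Iio]
  exact lintegral_exponentialPDF_of_nonpos le_rfl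

lemma expMeasure_map' {s r : ℝ} (hs : 0 < s) (hr : 0 < r) :
    Measure.map (fun x => (s / r) * x) (expMeasure s) = expMeasure r := by
  have hsr : 0 < s / r := div_pos hs hr
  have hprob : IsProbabilityMeasure (expMeasure s) := isProbabilityMeasure_expMeasure hs
  have hprob2 : IsProbabilityMeasure (expMeasure r) := isProbabilityMeasure_expMeasure hr
  have hmeas : Measurable fun x : ℝ => (s / r) * x := measurable_const_mul _
  have : IsProbabilityMeasure (Measure.map (fun x => (s / r) * x) (expMeasure s)) :=
    Measure.isProbabilityMeasure_map hmeas.aemeasurable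
  refine Measure.ext_of_Iic _ _ fun x => ?_
  rw [Measure.map_apply hmeas measurableSet_Iic]
  have hpre : (fun x : ℝ => (s / r) * x) ⁻¹' Iic x = Iic (x * (r / s)) := by
    ext y
    simp only [mem_preimage, mem_Iic]
    rw [mul_comm, ← le_div_iff₀ hsr, div_div_eq_mul_div, mul_div_assoc]
  rw [hpre, expMeasure_Iic' hs, expMeasure_Iic' hr]
  have hx : 0 ≤ x * (r / s) ↔ 0 ≤ x := by
    constructor
    · intro h; nlinarith [div_pos hr hs]
    · intro h; positivity
  have harg : s * (x * (r / s)) = r * x := by field_simp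
  rw [harg]
  simp [hx]

lemma pi_expMeasure_map' (k : ℕ) (r s : Fin k → ℝ) (hs : ∀ l, 0 < s l) (hr : ∀ l, 0 < r l) :
    Measure.map (fun (f : Fin k → ℝ) l => (s l / r l) * f l)
        (Measure.pi fun l => expMeasure (s l)) = Measure.pi fun l => expMeasure (r l) := by
  have hps : ∀ l, IsProbabilityMeasure (expMeasure (s l)) :=
    fun l => isProbabilityMeasure_expMeasure (hs l)
  have hpr : ∀ l, IsProbabilityMeasure (expMeasure (r l)) :=
    fun l => isProbabilityMeasure_expMeasure (hr l)
  have hmeas : Measurable fun (f : Fin k → ℝ) l => (s l / r l) * f l :=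
    measurable_pi_lambda _ fun l => (measurable_const_mul _).comp (measurable_pi_apply l)
  refine (Measure.pi_eq fun A hA => ?_).symm
  rw [Measure.map_apply hmeas (MeasurableSet.univ_pi hA)]
  have hpre : (fun (f : Fin k → ℝ) l => (s l / r l) * f l) ⁻¹' Set.pi Set.univ A
      = Set.pi Set.univ fun l => (fun x => (s l / r l) * x) ⁻¹' A l := by
    ext f; simp [Set.mem_pi]
  rw [hpre, Measure.pi_pi]
  refine Finset.prod_congr rfl fun l _ => ?_
  rw [← expMeasure_map' (hs l) (hr l),
    Measure.map_apply (measurable_const_mul _) (hA l)]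

/-- **Stochastic dominance of sums of independent exponentials with smaller rates.**
If `0 < s l ≤ r l` for all `l`, let `μ_r` (resp. `μ_s`) be the product over `l : Fin k` of the
exponential distributions with rates `r l` (resp. `s l`) on `Fin k → ℝ`. Then for every `t`,
`μ_s {f | ∑ l, f l < t} ≤ μ_r {f | ∑ l, f l < t}`: the sum of independent exponentials with the
smaller rates stochastically dominates the one with larger rates. -/
theorem exponential_sum_stochastic_dominance
    (k : ℕ) (r s : Fin k → ℝ) (hs : ∀ l, 0 < s l) (hsr : ∀ l, s l ≤ r l) :
    ∀ t : ℝ,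
      (Measure.pi fun l => expMeasure (s l)) {f : Fin k → ℝ | ∑ l, f l < t} ≤
        (Measure.pi fun l => expMeasure (r l)) {f : Fin k → ℝ | ∑ l, f l < t} := by
  intro t
  have hr : ∀ l, 0 < r l := fun l => lt_of_lt_of_le (hs l) (hsr l)
  have hps : ∀ l, IsProbabilityMeasure (expMeasure (s l)) :=
    fun l => isProbabilityMeasure_expMeasure (hs l)
  have hmeas : Measurable fun (f : Fin k → ℝ) l => (s l / r l) * f l :=
    measurable_pi_lambda _ fun l => (measurable_const_mul _).comp (measurable_pi_apply l)
  have hsum : MeasurableSet {f : Fin k → ℝ | ∑ l, f l < t} := by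
    exact measurableSet_lt (Finset.measurable_sum _ fun l _ => measurable_pi_apply l)
      measurable_const
  rw [← pi_expMeasure_map' k r s hs hr, Measure.map_apply hmeas hsum]
  refine measure_mono_ae ?_
  haveI : ∀ l, SigmaFinite (expMeasure (s l)) := fun l => by
    haveI := hps l; infer_instance
  have hae : ∀ᵐ f ∂(Measure.pi fun l => expMeasure (s l)), ∀ l, 0 ≤ f l := by
    rw [ae_all_iff]
    intro l
    rw [ae_iff]
    have hset : {f : Fin k → ℝ | ¬ 0 ≤ f l} = Function.eval l ⁻¹' Set.Iio 0 := by
      ext f; simp [not_le]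
    rw [hset]
    exact Measure.pi_eval_preimage_null _ expMeasure_neg_null'
  filter_upwards [hae] with f hf hfA
  change ∑ l, f l < t at hfA
  show ∑ l, s l / r l * f l < t
  calc ∑ l, s l / r l * f l ≤ ∑ l, f l := by
        refine Finset.sum_le_sum fun l _ => ?_
        exact mul_le_of_le_one_left (hf l) (div_le_one_of_le₀ (hsr l) (hr l).le)
    _ < t := hfA
end

section
/- Let ι be a nonempty finite type, let λ : ι → ℝ satisfy λ a > 0 for all a, and set Λ = Σ_a λ a. Let μ be the product over a ∈ ι of the exponential distributions with rates λ a, a measure on functions ι → ℝ. Then for every v ∈ ι and every w ≥ 0, μ({f : f v < w and f v < f a for all a ≠ v}) = (λ v / Λ) · (1 − exp(−w·Λ)). -/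
open MeasureTheory ProbabilityTheory
open scoped ENNReal NNReal
open Real Set

lemma integral_exp_neg_mul' (c w : ℝ) (hc : c ≠ 0) :
    ∫ t in (0:ℝ)..w, rexp (c * t) = c⁻¹ * (rexp (c * w) - 1) := by
  rw [intervalIntegral.integral_comp_mul_left rexp hc]
  simp [integral_exp]

lemma expMeasure_apply' (r : ℝ) {s : Set ℝ} (hs : MeasurableSet s) :
    expMeasure r s = ∫⁻ x in s, exponentialPDF r x := by
  rw [expMeasure, gammaMeasure, withDensity_apply _ hs]; rfl

lemma expMeasure_Ioi' {r : ℝ} (hr : 0 < r) {t : ℝ} (ht : 0 ≤ t) :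
    expMeasure r (Ioi t) = ENNReal.ofReal (rexp (-(r * t))) := by
  have hP := isProbabilityMeasure_expMeasure hr
  have hIic : expMeasure r (Iic t) = ENNReal.ofReal (1 - rexp (-(r * t))) := by
    rw [expMeasure_apply' r measurableSet_Iic, lintegral_exponentialPDF_eq_antiDeriv hr,
      if_pos ht]
  have hcompl : expMeasure r (Ioi t) = 1 - expMeasure r (Iic t) := by
    rw [← Set.compl_Iic, prob_compl_eq_one_sub measurableSet_Iic]
  have he1 : rexp (-(r * t)) ≤ 1 := exp_le_one_iff.2 (by nlinarith)
  rw [hcompl, hIic, ← ENNReal.ofReal_one, ← ENNReal.ofReal_sub _ (by nlinarith [exp_pos (-(r*t))])]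
  norm_num


/-- **Joint law of the argmin and the minimum of independent exponential clocks.**
Let `λ a > 0` for `a` in a nonempty finite type `ι`, `Λ = ∑ a, λ a`, and let `μ` be the product
of the exponential distributions with rates `λ a`. Then for every `v : ι` and `w ≥ 0`, the
probability that the clock of `v` rings before time `w` and strictly before all other clocks is
`(λ v / Λ) * (1 - exp (-w * Λ))`. -/
theorem exponential_argmin_min_joint_law
    (ι : Type) [Fintype ι] [Nonempty ι]
    (lam : ι → ℝ) (hlam : ∀ a, 0 < lam a) (Λ : ℝ) (hΛ : Λ = ∑ a, lam a)
    (v : ι) (w : ℝ) (hw : 0 ≤ w) :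
    (Measure.pi fun a : ι => expMeasure (lam a))
        {f : ι → ℝ | f v < w ∧ ∀ a : ι, a ≠ v → f v < f a} =
      ENNReal.ofReal ((lam v / Λ) * (1 - Real.exp (-w * Λ))) := by
  classical
  haveI : ∀ a : ι, IsProbabilityMeasure (expMeasure (lam a)) :=
    fun a => isProbabilityMeasure_expMeasure (hlam a)
  have hΛpos : 0 < Λ := hΛ ▸ Finset.sum_pos (fun a _ => hlam a) Finset.univ_nonempty
  set s : ℝ := ∑ a : {a : ι // ¬ a = v}, lam a.1 with hs
  have hsum : lam v + s = Λ := by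
    rw [hΛ, hs, ← Finset.sum_subtype (Finset.univ.filter fun a : ι => ¬ a = v)
      (by simp) lam,
      ← Finset.sum_filter_add_sum_filter_not Finset.univ (fun a : ι => a = v) lam]
    congr 1
    rw [Finset.filter_eq' Finset.univ v, if_pos (Finset.mem_univ v), Finset.sum_singleton]
  have hs0 : 0 ≤ s := Finset.sum_nonneg fun a _ => (hlam a.1).le
  set ν₂ : Measure ({a : ι // ¬ a = v} → ℝ) :=
    Measure.pi fun a : {a : ι // ¬ a = v} => expMeasure (lam a.1) with hν₂
  -- the product decomposition
  let E : (ι → ℝ) ≃ᵐ ℝ × ({a : ι // ¬ a = v} → ℝ) :=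
    (MeasurableEquiv.piEquivPiSubtypeProd (fun _ : ι => ℝ) (fun a => a = v)).trans
      ((MeasurableEquiv.piUnique (fun _ : {a : ι // a = v} => ℝ)).prodCongr
        (MeasurableEquiv.refl _))
  have hd : ((default : {a : ι // a = v}) : ι) = v := (default : {a : ι // a = v}).2
  have hE : MeasurePreserving E (Measure.pi fun a : ι => expMeasure (lam a))
      ((expMeasure (lam v)).prod ν₂) := by
    have h1 := measurePreserving_piEquivPiSubtypeProd
      (fun a : ι => expMeasure (lam a)) (fun a => a = v)
    have h2 := (@measurePreserving_piUnique _ (Subtype.fintype _) _ _ _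
      (fun a : {a : ι // a = v} => expMeasure (lam a.1))).prod
      (MeasurePreserving.id ν₂)
    rw [hd] at h2
    exact h2.comp h1
  have hpre : ∀ f : ι → ℝ, E f = (f v, fun a : {a : ι // ¬ a = v} => f a.1) := by
    intro f
    refine Prod.ext ?_ rfl
    show f ((default : {a : ι // a = v}) : ι) = f v
    rw [hd]
  set T : Set (ℝ × ({a : ι // ¬ a = v} → ℝ)) :=
    {p | p.1 < w ∧ ∀ a : {a : ι // ¬ a = v}, p.1 < p.2 a} with hT
  have hTm : MeasurableSet T := by
    have : T = {p : ℝ × ({a : ι // ¬ a = v} → ℝ) | p.1 < w} ∩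
        ⋂ a : {a : ι // ¬ a = v}, {p | p.1 < p.2 a} := by
      ext p; simp [hT]
    rw [this]
    exact (measurableSet_lt measurable_fst measurable_const).inter
      (MeasurableSet.iInter fun a => measurableSet_lt measurable_fst
        ((measurable_pi_apply a).comp measurable_snd))
  have hSeq : {f : ι → ℝ | f v < w ∧ ∀ a : ι, a ≠ v → f v < f a} = E ⁻¹' T := by
    ext f
    simp only [Set.mem_preimage, hpre f, hT, Set.mem_setOf_eq]
    constructor
    · rintro ⟨h1, h2⟩; exact ⟨h1, fun a => h2 a.1 a.2⟩
    · rintro ⟨h1, h2⟩; exact ⟨h1, fun a ha => h2 ⟨a, ha⟩⟩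
  rw [hSeq, ← Measure.map_apply E.measurable hTm, hE.map_eq, Measure.prod_apply hTm]
  -- compute the slice
  have hslice : ∀ t : ℝ, ν₂ (Prod.mk t ⁻¹' T) =
      Set.indicator (Iio w) (fun t => ν₂ (Set.pi Set.univ fun _ => Ioi t)) t := by
    intro t
    by_cases h : t < w
    · rw [Set.indicator_of_mem (show t ∈ Iio w from h)]
      congr 1
      ext y
      simp [hT, h, Set.mem_pi]
    · rw [Set.indicator_of_notMem (show t ∉ Iio w from h)]
      have : Prod.mk t ⁻¹' T = ∅ := by ext y; simp [hT, h]
      rw [this, measure_empty]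
  rw [lintegral_congr hslice, lintegral_indicator measurableSet_Iio]
  -- rewrite pi measure of box
  have hbox : ∀ t : ℝ, ν₂ (Set.pi Set.univ fun _ => Ioi t) =
      ∏ a : {a : ι // ¬ a = v}, expMeasure (lam a.1) (Ioi t) := fun t => Measure.pi_pi _ _
  -- expMeasure as withDensity
  have hwd : expMeasure (lam v) = volume.withDensity (exponentialPDF (lam v)) := rfl
  have hGm : Measurable fun t : ℝ => ν₂ (Set.pi Set.univ fun _ => Ioi t) := by
    simp only [hbox]
    exact Finset.measurable_prod _ fun a _ =>
      (Antitone.measurable fun t₁ t₂ h12 => measure_mono (Ioi_subset_Ioi h12))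
  have hpdfm : Measurable (exponentialPDF (lam v)) :=
    (measurable_exponentialPDFReal (lam v)).ennreal_ofReal
  rw [hwd, restrict_withDensity measurableSet_Iio,
    lintegral_withDensity_eq_lintegral_mul _ hpdfm hGm]
  -- split Iio w = Iio 0 ∪ Ico 0 w
  have hsplit : Iio w = Iio (0:ℝ) ∪ Ico 0 w := (Iio_union_Ico_eq_Iio hw).symm
  rw [hsplit, lintegral_union measurableSet_Ico
    ((Iio_disjoint_Ici le_rfl).mono_right Ico_subset_Ici_self)]
  have hzero : ∫⁻ t in Iio (0:ℝ),
      (exponentialPDF (lam v) * fun t => ν₂ (Set.pi Set.univ fun _ => Ioi t)) t = 0 := by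
    have h0 : ∀ t ∈ Iio (0:ℝ),
        (exponentialPDF (lam v) * fun t => ν₂ (Set.pi Set.univ fun _ => Ioi t)) t
          = (0:ℝ≥0∞) := fun t ht => by
      simp [Pi.mul_apply, exponentialPDF_of_neg (mem_Iio.mp ht)]
    rw [setLIntegral_congr_fun measurableSet_Iio h0, lintegral_zero]
  rw [hzero, zero_add]
  have hptwise : ∀ t ∈ Ico (0:ℝ) w,
      (exponentialPDF (lam v) * fun t => ν₂ (Set.pi Set.univ fun _ => Ioi t)) t =
        ENNReal.ofReal (lam v * rexp (-Λ * t)) := by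
    rintro t ⟨ht0, _⟩
    have hprod : ν₂ (Set.pi Set.univ fun _ => Ioi t) = ENNReal.ofReal (rexp (-(s * t))) := by
      rw [hbox]
      have : ∀ a : {a : ι // ¬ a = v}, expMeasure (lam a.1) (Ioi t)
          = ENNReal.ofReal (rexp (-(lam a.1 * t))) := fun a => expMeasure_Ioi' (hlam a.1) ht0
      rw [Finset.prod_congr rfl fun a _ => this a,
        ← ENNReal.ofReal_prod_of_nonneg (fun a _ => (exp_pos _).le), ← Real.exp_sum]
      congr 2
      rw [Finset.sum_neg_distrib, ← Finset.sum_mul]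
    rw [Pi.mul_apply, hprod, exponentialPDF_of_nonneg ht0,
      ← ENNReal.ofReal_mul (mul_nonneg (hlam v).le (exp_pos _).le)]
    congr 1
    rw [mul_assoc, ← Real.exp_add]
    congr 2
    nlinarith [hsum]
  rw [setLIntegral_congr_fun measurableSet_Ico hptwise]
  -- convert to a real integral
  have hint : IntegrableOn (fun t => lam v * rexp (-Λ * t)) (Ico 0 w) volume :=
    ((continuous_const.mul ((continuous_const.mul continuous_id).rexp)).integrableOn_Icc).mono_set
      Ico_subset_Icc_self
  rw [← ofReal_integral_eq_lintegral_ofReal hint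
    (ae_of_all _ fun t => mul_nonneg (hlam v).le (exp_pos _).le)]
  congr 1
  rw [integral_Ico_eq_integral_Ioo, ← integral_Ioc_eq_integral_Ioo,
    ← intervalIntegral.integral_of_le hw, intervalIntegral.integral_const_mul]
  rw [integral_exp_neg_mul' (-Λ) w (neg_ne_zero.mpr hΛpos.ne'),
    show -Λ * w = -w * Λ by ring]
  rw [inv_neg]
  ring
end
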